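/- Let f ∈ C¹(M) be affine and nonconstant on a nondegenerate closed interval J ⊆ [-M,M] with N(f,J) ∉ J. Then there exists r > 0 with the following property: for every δ > 0, every x in the interior of J, and every y ∈ ℝ with |y - N(f,J)| < r, there exists g ∈ C¹(M) such that (i) d₁(f,g) < ε, (ii) f(t) = g(t) for all t ∈ [-M,M] outside (x-δ, x+δ), (iii) g is affine and nonconstant on some neighbourhood of x, and (iv) N(g,x) = y. Here ε > 0 is given in advance of choosing r. -/

import Mathlib

open Set

/-- Newton map: N(g,x) = x - g(x)/g'(x). -/
noncomputable def newton (g g' : ℝ → ℝ) (x : ℝ) : ℝ := x - g x / g' x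

namespace Stmt4Aux

noncomputable def Pq (u : ℝ) : ℝ := u - 10*(u-1/2)^2 + 12*(u-1/2)^3
noncomputable def Pq' (u : ℝ) : ℝ := 1 - 20*(u-1/2) + 36*(u-1/2)^2

noncomputable def G1 (u : ℝ) : ℝ := if u ≤ -1 then 0 else -(Pq (-u))
noncomputable def G1' (u : ℝ) : ℝ := if u ≤ -1 then 0 else Pq' (-u)
noncomputable def G2 (u : ℝ) : ℝ := if u ≤ -(1/2) then G1 u else u
noncomputable def G2' (u : ℝ) : ℝ := if u ≤ -(1/2) then G1' u else 1
noncomputable def G3 (u : ℝ) : ℝ := if u ≤ 1/2 then G2 u else Pq u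
noncomputable def G3' (u : ℝ) : ℝ := if u ≤ 1/2 then G2' u else Pq' u
noncomputable def hfun (u : ℝ) : ℝ := if u ≤ 1 then G3 u else 0
noncomputable def hD (u : ℝ) : ℝ := if u ≤ 1 then G3' u else 0

lemma glueDeriv {c : ℝ} {p q p' q' : ℝ → ℝ}
    (hp : ∀ u, HasDerivAt p (p' u) u) (hq : ∀ u, HasDerivAt q (q' u) u)
    (hv : p c = q c) (hd : p' c = q' c) (u : ℝ) :
    HasDerivAt (fun t => if t ≤ c then p t else q t) (if u ≤ c then p' u else q' u) u := by
  rcases lt_trichotomy u c with h | rfl | h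
  · rw [if_pos h.le]
    refine (hp u).congr_of_eventuallyEq ?_
    filter_upwards [Iio_mem_nhds h] with t ht
    rw [if_pos (le_of_lt (mem_Iio.mp ht))]
  · rw [if_pos le_rfl]
    have h1 : HasDerivWithinAt (fun t => if t ≤ u then p t else q t) (p' u) (Iic u) u := by
      refine (hp u).hasDerivWithinAt.congr (fun t ht => ?_) (by simp)
      rw [if_pos (mem_Iic.mp ht)]
    have h2 : HasDerivWithinAt (fun t => if t ≤ u then p t else q t) (p' u) (Ici u) u := by
      rw [hd]
      refine (hq u).hasDerivWithinAt.congr (fun t ht => ?_) (by simp [hv])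
      by_cases h' : t ≤ u
      · have : t = u := le_antisymm h' ht
        simp [this, hv]
      · simp [h']
    have h3 := h1.union h2
    rw [Iic_union_Ici] at h3
    exact hasDerivWithinAt_univ.1 h3
  · rw [if_neg (not_le.2 h)]
    refine (hq u).congr_of_eventuallyEq ?_
    filter_upwards [Ioi_mem_nhds h] with t ht
    rw [if_neg (not_le.2 (mem_Ioi.mp ht))]

lemma hPq : ∀ u, HasDerivAt Pq (Pq' u) u := by
  intro u
  unfold Pq Pq'
  have h1 : HasDerivAt (fun u : ℝ => u - 10*(u-1/2)^2 + 12*(u-1/2)^3)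
      (1 - 10*(2*(u-1/2)^1*1) + 12*(3*(u-1/2)^2*1)) u := by
    have hid : HasDerivAt (fun u : ℝ => u - 1/2) 1 u := (hasDerivAt_id u).sub_const _
    exact ((hasDerivAt_id u).sub ((hid.pow 2).const_mul 10)).add ((hid.pow 3).const_mul 12)
  convert h1 using 1; ring

lemma hPn : ∀ u, HasDerivAt (fun u : ℝ => -(Pq (-u))) (Pq' (-u)) u := by
  intro u
  have h1 : HasDerivAt (fun u : ℝ => -u) (-1) u := hasDerivAt_neg u
  have h2 := ((hPq (-u)).comp u h1).neg
  rw [show Pq' (-u) = -(Pq' (-u) * -1) by ring]; exact h2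

lemma hG1 : ∀ u, HasDerivAt G1 (G1' u) u := by
  intro u
  have := glueDeriv (c := -1) (p := fun _ => (0:ℝ)) (q := fun u => -(Pq (-u)))
    (p' := fun _ => 0) (q' := fun u => Pq' (-u))
    (fun u => hasDerivAt_const u 0) hPn (by norm_num [Pq]) (by norm_num [Pq']) u
  exact this

lemma hG2 : ∀ u, HasDerivAt G2 (G2' u) u := by
  intro u
  exact glueDeriv hG1 (fun u => hasDerivAt_id u)
    (by norm_num [G1, Pq]) (by norm_num [G1', Pq']) u

lemma hG3 : ∀ u, HasDerivAt G3 (G3' u) u := by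
  intro u
  exact glueDeriv hG2 hPq
    (by norm_num [G2, G1, Pq]) (by norm_num [G2', G1', Pq']) u

lemma hHderiv : ∀ u, HasDerivAt hfun (hD u) u := by
  intro u
  exact glueDeriv hG3 (fun u => hasDerivAt_const u 0)
    (by norm_num [G3, G2, Pq]) (by norm_num [G3', G2', Pq']) u

lemma hDcont : Continuous hD := by
  have c1 : Continuous G1' := by
    refine Continuous.if_le continuous_const (by unfold Pq'; fun_prop) continuous_id
      continuous_const (fun x hx => by subst hx; norm_num [Pq'])
  have c2 : Continuous G2' := by
    refine Continuous.if_le c1 continuous_const continuous_id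
      continuous_const (fun x hx => by subst hx; norm_num [G1', Pq'])
  have c3 : Continuous G3' := by
    refine Continuous.if_le c2 (by unfold Pq'; fun_prop) continuous_id
      continuous_const (fun x hx => by subst hx; norm_num [G2', G1', Pq'])
  refine Continuous.if_le c3 continuous_const continuous_id
    continuous_const (fun x hx => by subst hx; norm_num [G3', G2', Pq'])

lemma hbound : ∀ u : ℝ, |hfun u| ≤ 5 ∧ |hD u| ≤ 20 := by
  intro u
  unfold hfun hD G3 G3' G2 G2' G1 G1' Pq Pq'
  split_ifs with h1 h2 h3 h4
  · norm_num
  · rw [not_le] at h4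
    refine ⟨abs_le.2 ⟨by nlinarith [sq_nonneg (u+1), sq_nonneg (u+1/2)], by nlinarith [sq_nonneg (u+1), sq_nonneg (u+1/2)]⟩,
      abs_le.2 ⟨by nlinarith [sq_nonneg (u+1), sq_nonneg (u+1/2)], by nlinarith [sq_nonneg (u+1), sq_nonneg (u+1/2)]⟩⟩
  · rw [not_le] at h3
    refine ⟨abs_le.2 ⟨by linarith, by linarith⟩, abs_le.2 ⟨by norm_num, by norm_num⟩⟩
  · rw [not_le] at h2
    refine ⟨abs_le.2 ⟨by nlinarith [sq_nonneg (u-1), sq_nonneg (u-1/2)], by nlinarith [sq_nonneg (u-1), sq_nonneg (u-1/2)]⟩,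
      abs_le.2 ⟨by nlinarith [sq_nonneg (u-1), sq_nonneg (u-1/2)], by nlinarith [sq_nonneg (u-1), sq_nonneg (u-1/2)]⟩⟩
  · norm_num

lemma hlin : ∀ u : ℝ, |u| ≤ 1/2 → hfun u = u ∧ hD u = 1 := by
  intro u hu
  rw [abs_le] at hu
  unfold hfun hD G3 G3' G2 G2' G1 G1'
  split_ifs with h1 h2 h3 h4
  · exfalso; linarith
  · have : u = -(1/2) := le_antisymm h3 (by linarith [hu.1])
    subst this; norm_num [Pq, Pq']
  · exact ⟨rfl, rfl⟩
  · exfalso; linarith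
  · exfalso; linarith

lemma hzero : ∀ u : ℝ, 1 ≤ |u| → hfun u = 0 := by
  intro u hu
  rcases le_abs'.mp hu with h | h
  · unfold hfun G3 G2 G1
    rw [if_pos (by linarith : u ≤ 1), if_pos (by linarith : u ≤ 1/2),
      if_pos (by linarith : u ≤ -(1/2)), if_pos h]
  · rcases eq_or_lt_of_le h with h' | h'
    · rw [← h']; norm_num [hfun, G3, Pq]
    · unfold hfun
      rw [if_neg (not_le.2 h')]


end Stmt4Aux

open Stmt4Aux

/-- Lemma: let f ∈ C¹(M) be affine nonconstant (f(t) = at+b) on a nondegenerate closed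
interval J = [c,d] ⊆ [-M,M], with N(f,J) = -b/a ∉ J, and let ε > 0. Then there is r > 0
such that for all δ > 0, x ∈ Int J, and y with |y - N(f,J)| < r, there exists g ∈ C¹(M)
with d₁(f,g) < ε, agreeing with f outside (x-δ, x+δ), affine nonconstant on a
neighbourhood of x, and with N(g,x) = y. -/
theorem stmt4 (M : ℝ) (hM : 0 < M) (f f' : ℝ → ℝ)
    (hf : ∀ t ∈ Icc (-M) M, HasDerivWithinAt f (f' t) (Icc (-M) M) t)
    (hf' : ContinuousOn f' (Icc (-M) M))
    (c d : ℝ) (hcd : c < d) (hJ : Icc c d ⊆ Icc (-M) M)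
    (a b : ℝ) (ha : a ≠ 0)
    (haff : ∀ t ∈ Icc c d, f t = a * t + b ∧ f' t = a)
    (hout : -b / a ∉ Icc c d)
    (ε : ℝ) (hε : 0 < ε) :
    ∃ r > 0, ∀ δ > 0, ∀ x ∈ Ioo c d, ∀ y : ℝ, |y - (-b / a)| < r →
      ∃ g g' : ℝ → ℝ,
        (∀ t ∈ Icc (-M) M, HasDerivWithinAt g (g' t) (Icc (-M) M) t) ∧
        ContinuousOn g' (Icc (-M) M) ∧
        (∀ t ∈ Icc (-M) M, |f t - g t| + |f' t - g' t| < ε) ∧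
        (∀ t ∈ Icc (-M) M, t ∉ Ioo (x - δ) (x + δ) → f t = g t) ∧
        (∃ γ > 0, ∃ a' b' : ℝ, a' ≠ 0 ∧
          ∀ s ∈ Icc (x - γ) (x + γ), g s = a' * s + b' ∧ g' s = a') ∧
        g' x ≠ 0 ∧ newton g g' x = y := by
  have hout' : -b/a < c ∨ d < -b/a := by
    rcases lt_or_ge (-b/a) c with h | h
    · exact Or.inl h
    rcases le_or_gt (-b/a) d with h2 | h2
    · exact absurd ⟨h, h2⟩ hout
    · exact Or.inr h2
  set D : ℝ := if -b/a < c then c - (-b/a) else (-b/a) - d with hDdef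
  have hDpos : 0 < D := by
    rcases hout' with h | h
    · rw [hDdef, if_pos h]; linarith
    · rw [hDdef, if_neg (by push_neg; linarith : ¬ -b/a < c)]; linarith
  have hapos : 0 < |a| := abs_pos.2 ha
  refine ⟨min (D/2) (ε*D/(100*|a|)), lt_min (by linarith) (by positivity), ?_⟩
  intro δ hδ x hx y hy
  have hxIcc : x ∈ Icc c d := ⟨hx.1.le, hx.2.le⟩
  have hr2 : |y - (-b/a)| < D/2 := lt_of_lt_of_le hy (min_le_left _ _)
  have hr3 : |y - (-b/a)| < ε*D/(100*|a|) := lt_of_lt_of_le hy (min_le_right _ _)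
  have hxy : D/2 ≤ |x - y| := by
    rcases hout' with h | h
    · rw [hDdef, if_pos h] at hr2 ⊢
      rw [abs_lt] at hr2
      rw [le_abs]
      left; linarith [hx.1, hr2.2]
    · have hnc : ¬ -b/a < c := by push_neg; linarith
      rw [hDdef, if_neg hnc] at hr2 ⊢
      rw [abs_lt] at hr2
      rw [le_abs]
      right; linarith [hx.2, hr2.1]
  have hxy0 : x - y ≠ 0 := by
    intro h0; rw [h0, abs_zero] at hxy; linarith
  set δ' : ℝ := min δ (min (x - c) (min (d - x) 1)) with hδ'def
  have hδ'pos : 0 < δ' :=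
    lt_min hδ (lt_min (by linarith [hx.1]) (lt_min (by linarith [hx.2]) one_pos))
  have hδ'δ : δ' ≤ δ := min_le_left _ _
  have hδ'c : δ' ≤ x - c := le_trans (min_le_right _ _) (min_le_left _ _)
  have hδ'd : δ' ≤ d - x :=
    le_trans (min_le_right _ _) (le_trans (min_le_right _ _) (min_le_left _ _))
  have hδ'1 : δ' ≤ 1 :=
    le_trans (min_le_right _ _) (le_trans (min_le_right _ _) (min_le_right _ _))
  have hδ'0 : δ' ≠ 0 := ne_of_gt hδ'pos
  set m : ℝ := (b + a*y)/(x - y) with hmdef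
  have hmb : |m| ≤ ε/50 := by
    have h1 : |b + a*y| = |a| * |y - (-b/a)| := by
      rw [← abs_mul]; congr 1; field_simp; ring
    have h2 : |b + a*y| ≤ |a| * (ε*D/(100*|a|)) := by
      rw [h1]; exact mul_le_mul_of_nonneg_left hr3.le (abs_nonneg a)
    have h3 : |a| * (ε*D/(100*|a|)) = ε*D/100 := by
      field_simp
    have h4 : |m| = |b + a*y| / |x - y| := by rw [hmdef, abs_div]
    have h5 : |b + a*y| / |x - y| ≤ (ε*D/100) / (D/2) :=
      div_le_div₀ (by positivity) (h3 ▸ h2) (by linarith) hxy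
    have h6 : (ε*D/100) / (D/2) = ε/50 := by
      field_simp; ring
    rw [h4]; rw [h6] at h5; exact h5
  set g : ℝ → ℝ := fun t => f t + m * (δ' * hfun ((t - x)/δ')) with hgdef
  set G' : ℝ → ℝ := fun t => f' t + m * hD ((t - x)/δ') with hG'def
  have hφ : ∀ t : ℝ, HasDerivAt (fun t => m * (δ' * hfun ((t - x)/δ'))) (m * hD ((t - x)/δ')) t := by
    intro t
    have h1 : HasDerivAt (fun t : ℝ => (t - x)/δ') (1/δ') t :=
      ((hasDerivAt_id t).sub_const x).div_const δ'
    have h2 := (hHderiv ((t - x)/δ')).comp t h1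
    have h3 := (h2.const_mul δ').const_mul m
    rw [show m * hD ((t - x)/δ') = m * (δ' * (hD ((t - x)/δ') * (1/δ'))) by field_simp]
    exact h3
  have hgderiv : ∀ t ∈ Icc (-M) M, HasDerivWithinAt g (G' t) (Icc (-M) M) t :=
    fun t ht => (hf t ht).add (hφ t).hasDerivWithinAt
  have hG'cont : ContinuousOn G' (Icc (-M) M) := by
    apply hf'.add
    exact (continuous_const.mul (hDcont.comp (by fun_prop))).continuousOn
  have hclose : ∀ t ∈ Icc (-M) M, |f t - g t| + |f' t - G' t| < ε := by
    intro t _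
    have hb := hbound ((t - x)/δ')
    have e1 : f t - g t = -(m * (δ' * hfun ((t - x)/δ'))) := by rw [hgdef]; ring
    have e2 : f' t - G' t = -(m * hD ((t - x)/δ')) := by rw [hG'def]; ring
    rw [e1, e2, abs_neg, abs_neg, abs_mul, abs_mul, abs_mul]
    have hδ'abs : |δ'| ≤ 1 := by rw [abs_of_pos hδ'pos]; exact hδ'1
    have b1 : |δ'| * |hfun ((t - x)/δ')| ≤ 5 := by
      nlinarith [abs_nonneg δ', abs_nonneg (hfun ((t - x)/δ')), hb.1]
    have b2 : |m| * (|δ'| * |hfun ((t - x)/δ')|) ≤ |m| * 5 :=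
      mul_le_mul_of_nonneg_left b1 (abs_nonneg m)
    have b3 : |m| * |hD ((t - x)/δ')| ≤ |m| * 20 :=
      mul_le_mul_of_nonneg_left hb.2 (abs_nonneg m)
    nlinarith [abs_nonneg m]
  have hagree : ∀ t ∈ Icc (-M) M, t ∉ Ioo (x - δ) (x + δ) → f t = g t := by
    intro t _ htout
    have h1 : 1 ≤ |(t - x)/δ'| := by
      rw [abs_div, abs_of_pos hδ'pos, le_div_iff₀ hδ'pos, one_mul]
      have h' : t ≤ x - δ ∨ x + δ ≤ t := by
        by_contra hc
        push_neg at hc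
        exact htout (mem_Ioo.2 ⟨hc.1, hc.2⟩)
      rcases h' with h | h
      · exact le_abs.2 (Or.inr (by linarith))
      · exact le_abs.2 (Or.inl (by linarith))
    rw [hgdef]
    simp only [hzero _ h1, mul_zero, add_zero]
  have hax0 : a*x + b ≠ 0 := by
    intro h0
    apply hout
    have hx' : x = -b/a := by field_simp; linarith
    rw [← hx']; exact hxIcc
  have ham : a + m = (a*x + b)/(x - y) := by
    rw [hmdef]; field_simp; ring
  have ha' : a + m ≠ 0 := by rw [ham]; exact div_ne_zero hax0 hxy0
  have h0 := hlin 0 (by norm_num)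
  have hG'x : G' x = (a*x + b)/(x - y) := by
    simp only [hG'def, sub_self, zero_div, h0.2, mul_one]
    rw [(haff x hxIcc).2, ham]
  refine ⟨g, G', hgderiv, hG'cont, hclose, hagree,
    ⟨δ'/2, by positivity, a + m, b - m*x, ha', ?_⟩, ?_, ?_⟩
  · intro s hs
    have hs1 : |s - x| ≤ δ'/2 := by
      rw [abs_le]; exact ⟨by linarith [hs.1], by linarith [hs.2]⟩
    have hu : |(s - x)/δ'| ≤ 1/2 := by
      rw [abs_div, abs_of_pos hδ'pos, div_le_iff₀ hδ'pos]
      linarith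
    obtain ⟨hl1, hl2⟩ := hlin _ hu
    have hsJ : s ∈ Icc c d := ⟨by linarith [hs.1, hδ'c], by linarith [hs.2, hδ'd]⟩
    obtain ⟨hf1, hf2⟩ := haff s hsJ
    constructor
    · simp only [hgdef]
      rw [hf1, hl1]
      field_simp; ring
    · simp only [hG'def]
      rw [hf2, hl2]; ring
  · rw [hG'x]; exact div_ne_zero hax0 hxy0
  · have hgx : g x = a*x + b := by
      simp only [hgdef, sub_self, zero_div, h0.1, mul_zero, add_zero]
      exact (haff x hxIcc).1
    unfold newton
    rw [hgx, hG'x]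
    field_simp
    rw [mul_div_cancel_left₀ _ (by rwa [mul_comm] at hax0)]; ring
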